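/- Let φ : ℝ^N → ℝ be measurable and write φ⁺(x) := max(φ(x), 0) and φ⁻(x) := max(−φ(x), 0). Assume that the function (x,y) ↦ (φ(x) − φ(y))(φ⁻(x) − φ⁻(y))/|x − y|^{N+2s} is Lebesgue integrable on ℝ^N × ℝ^N and that F(φ⁻, φ⁻) < ∞. Then −F(φ, φ⁻) ≥ F(φ⁻, φ⁻) ≥ 0. -/
import Mathlib


open MeasureTheory Real Set

noncomputable section

/-- Euclidean space `ℝ^N`. -/
abbrev E (N : ℕ) := EuclideanSpace ℝ (Fin N)

/-- The normalization constant `C_{N,s} = s·2^{2s}·Γ((N+2s)/2)/(π^{N/2}·Γ(1−s))`. -/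
def CNs (N : ℕ) (s : ℝ) : ℝ :=
  s * (2 : ℝ) ^ (2 * s) * Real.Gamma (((N : ℝ) + 2 * s) / 2) /
    (Real.pi ^ ((N : ℝ) / 2) * Real.Gamma (1 - s))

/-- The Gagliardo kernel integrand `(u(x)−u(y))(v(x)−v(y))/|x−y|^{N+2s}`. -/
def kern (N : ℕ) (s : ℝ) (u v : E N → ℝ) (p : E N × E N) : ℝ :=
  (u p.1 - u p.2) * (v p.1 - v p.2) / ‖p.1 - p.2‖ ^ ((N : ℝ) + 2 * s)

/-- The full bilinear form `F(u,v)` over `ℝ^N × ℝ^N`. -/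
def FF (N : ℕ) (s : ℝ) (u v : E N → ℝ) : ℝ :=
  (CNs N s / 2) * ∫ p : E N × E N, kern N s u v p

lemma num_ineq (a b : ℝ) :
    (a - b) * (max (-a) 0 - max (-b) 0) ≤ -((max (-a) 0 - max (-b) 0) * (max (-a) 0 - max (-b) 0)) := by
  rcases le_total a 0 with ha | ha <;> rcases le_total b 0 with hb | hb <;>
    simp [max_eq_left, max_eq_right, neg_nonneg.mpr, neg_nonpos.mpr, ha, hb] <;> nlinarith

lemma CNs_nonneg (N : ℕ) (s : ℝ) (hs0 : 0 < s) (hs1 : s < 1) : 0 ≤ CNs N s := by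
  have h1 : 0 < Real.Gamma (((N : ℝ) + 2 * s) / 2) :=
    Real.Gamma_pos_of_pos (by positivity)
  have h2 : 0 < Real.Gamma (1 - s) := Real.Gamma_pos_of_pos (by linarith)
  have h3 : (0:ℝ) < Real.pi ^ ((N : ℝ) / 2) := Real.rpow_pos_of_pos Real.pi_pos _
  have h4 : (0:ℝ) < (2:ℝ) ^ (2 * s) := Real.rpow_pos_of_pos two_pos _
  unfold CNs
  positivity

lemma kern_ineq (N : ℕ) (s : ℝ) (φ : E N → ℝ) (p : E N × E N) :
    kern N s φ (fun x => max (-φ x) 0) p ≤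
      -(kern N s (fun x => max (-φ x) 0) (fun x => max (-φ x) 0) p) := by
  unfold kern
  rw [← neg_div]
  rcases eq_or_lt_of_le (Real.rpow_nonneg (norm_nonneg (p.1 - p.2)) ((N : ℝ) + 2 * s)) with h | h
  · rw [← h, div_zero, div_zero]
  · exact div_le_div_of_nonneg_right (num_ineq _ _) h.le
      |>.trans_eq rfl

lemma kern_nonneg (N : ℕ) (s : ℝ) (φ : E N → ℝ) (p : E N × E N) :
    0 ≤ kern N s (fun x => max (-φ x) 0) (fun x => max (-φ x) 0) p := by
  unfold kern
  apply div_nonneg (mul_self_nonneg _) (Real.rpow_nonneg (norm_nonneg _) _)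

/-- the key inequality `−F(φ, φ⁻) ≥ F(φ⁻, φ⁻) ≥ 0`. -/
theorem neg_part_inequality_full (N : ℕ) (s : ℝ) (hN : 1 ≤ N) (hs0 : 0 < s) (hs1 : s < 1)
    (φ : E N → ℝ) (hφ : Measurable φ)
    (hint : Integrable (kern N s φ (fun x => max (-φ x) 0)))
    (hint2 : Integrable (kern N s (fun x => max (-φ x) 0) (fun x => max (-φ x) 0))) :
    FF N s (fun x => max (-φ x) 0) (fun x => max (-φ x) 0) ≤
        -FF N s φ (fun x => max (-φ x) 0) ∧
      0 ≤ FF N s (fun x => max (-φ x) 0) (fun x => max (-φ x) 0) := by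
  have hC := CNs_nonneg N s hs0 hs1
  have hC2 : 0 ≤ CNs N s / 2 := by linarith
  have hI : (0:ℝ) ≤ ∫ p : E N × E N, kern N s (fun x => max (-φ x) 0) (fun x => max (-φ x) 0) p :=
    integral_nonneg (fun p => kern_nonneg N s φ p)
  constructor
  · unfold FF
    rw [← mul_neg]
    apply mul_le_mul_of_nonneg_left _ hC2
    rw [← integral_neg]
    exact integral_mono hint2 hint.neg (fun p => by
      have := kern_ineq N s φ p; linarith)
  · exact mul_nonneg hC2 hI
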